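/- Suppose G is a group with finite symmetric generating set X whose set of geodesic words is k-locally excluding for some k > 0. If w is a geodesic word over X, x ∈ X, and v' is the suffix of w of length 2k-2 (or all of w if l(w) < 2k-2), then l_G(wx) - l(w) = l_G(v'x) - l(v'). -/

import Mathlib

/-- The minimal length of a word over `X` representing `g` (the geodesic length `l_G`). -/
noncomputable def lG {G : Type*} [Group G] (X : Set G) (g : G) : ℕ :=
  sInf {n | ∃ w : List G, (∀ x ∈ w, x ∈ X) ∧ w.prod = g ∧ w.length = n}

/-- `w` is a geodesic word over `X`. -/
def Geodesic {G : Type*} [Group G] (X : Set G) (w : List G) : Prop :=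
  (∀ x ∈ w, x ∈ X) ∧ w.length = lG X w.prod

/-- `w` is a `k`-local geodesic over `X`: every subword (contiguous factor) of length
at most `k` is geodesic. -/
def LocalGeodesic {G : Type*} [Group G] (X : Set G) (k : ℕ) (w : List G) : Prop :=
  (∀ x ∈ w, x ∈ X) ∧ ∀ u : List G, u <:+: w → u.length ≤ k → Geodesic X u

/-- A language `L` of words over `X` is `k`-locally excluding: membership (among words
over `X`) is equivalent to avoiding a fixed finite set of forbidden subwords of length
at most `k`. -/
def LocallyExcluding {G : Type*} [Group G] (X : Set G) (k : ℕ) (L : Set (List G)) : Prop :=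
  ∃ F : Set (List G), F.Finite ∧ (∀ f ∈ F, f.length ≤ k) ∧
    ∀ w : List G, (∀ x ∈ w, x ∈ X) → (w ∈ L ↔ ∀ f ∈ F, ¬ f <:+: w)

/-- One step of rewriting with the set of rules `R` (replace a subword `p.1` by `p.2`). -/
def Rewrite {G : Type*} (R : Set (List G × List G)) (w w' : List G) : Prop :=
  ∃ p ∈ R, ∃ l r : List G, w = l ++ p.1 ++ r ∧ w' = l ++ p.2 ++ r

section Aux

variable {G : Type*} [Group G] {X : Set G}

private lemma lG_le {g : G} {w : List G} (hX : ∀ a ∈ w, a ∈ X) (hp : w.prod = g) :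
    lG X g ≤ w.length :=
  Nat.sInf_le ⟨w, hX, hp, rfl⟩

private lemma exists_rep (hsym : ∀ x ∈ X, x⁻¹ ∈ X) (hgen : Subgroup.closure X = ⊤) (g : G) :
    ∃ w : List G, (∀ a ∈ w, a ∈ X) ∧ w.prod = g := by
  have hg : g ∈ Subgroup.closure X := by rw [hgen]; trivial
  induction hg using Subgroup.closure_induction with
  | mem a ha => exact ⟨[a], by simpa using ha, by simp⟩
  | one => exact ⟨[], by simp, by simp⟩
  | mul a b _ _ iha ihb =>
      obtain ⟨wa, hwa, hpa⟩ := iha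
      obtain ⟨wb, hwb, hpb⟩ := ihb
      refine ⟨wa ++ wb, ?_, by simp [hpa, hpb]⟩
      intro y hy
      rcases List.mem_append.mp hy with h | h
      exacts [hwa y h, hwb y h]
  | inv a _ ih =>
      obtain ⟨wa, hwa, hpa⟩ := ih
      refine ⟨(wa.map (·⁻¹)).reverse, ?_, ?_⟩
      · intro y hy
        simp only [List.mem_reverse, List.mem_map] at hy
        obtain ⟨z, hz, rfl⟩ := hy
        exact hsym z (hwa z hz)
      · rw [← hpa]
        exact (List.prod_inv_reverse wa).symm

private lemma lG_spec {g : G} (h : ∃ w : List G, (∀ a ∈ w, a ∈ X) ∧ w.prod = g) :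
    ∃ w : List G, (∀ a ∈ w, a ∈ X) ∧ w.prod = g ∧ w.length = lG X g := by
  obtain ⟨w0, h1, h2⟩ := h
  have hne : {n | ∃ w : List G, (∀ x ∈ w, x ∈ X) ∧ w.prod = g ∧ w.length = n}.Nonempty :=
    ⟨w0.length, w0, h1, h2, rfl⟩
  obtain ⟨w, hw1, hw2, hw3⟩ := Nat.sInf_mem hne
  exact ⟨w, hw1, hw2, hw3⟩

private lemma lG_mul_le (hsym : ∀ x ∈ X, x⁻¹ ∈ X) (hgen : Subgroup.closure X = ⊤)
    (g h : G) : lG X (g * h) ≤ lG X g + lG X h := by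
  obtain ⟨wg, hg1, hg2, hg3⟩ := lG_spec (exists_rep hsym hgen g)
  obtain ⟨wh, hh1, hh2, hh3⟩ := lG_spec (exists_rep hsym hgen h)
  have hX : ∀ a ∈ wg ++ wh, a ∈ X := by
    intro a ha
    rcases List.mem_append.mp ha with h' | h'
    exacts [hg1 a h', hh1 a h']
  have := lG_le hX (by simp [hg2, hh2] : (wg ++ wh).prod = g * h)
  simp only [List.length_append] at this
  omega

private lemma geodesic_infix {w u : List G} (hw : Geodesic X w) (h : u <:+: w) :
    Geodesic X u := by
  obtain ⟨s, t, hst⟩ := h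
  have huX : ∀ a ∈ u, a ∈ X := fun a ha => hw.1 a (by rw [← hst]; simp [ha])
  have hle' : lG X u.prod ≤ u.length := lG_le huX rfl
  rcases eq_or_lt_of_le hle' with heq | hlt
  · exact ⟨huX, heq.symm⟩
  · exfalso
    obtain ⟨c, hc1, hc2, hc3⟩ := lG_spec ⟨u, huX, rfl⟩
    have hrep : (s ++ c ++ t).prod = w.prod := by
      rw [← hst]; simp [List.prod_append, hc2]
    have hXr : ∀ a ∈ s ++ c ++ t, a ∈ X := by
      intro a ha
      simp only [List.mem_append] at ha
      rcases ha with (ha | ha) | ha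
      · exact hw.1 a (by rw [← hst]; simp [ha])
      · exact hc1 a ha
      · exact hw.1 a (by rw [← hst]; simp [ha])
    have h1 := lG_le hXr hrep
    have h2 : w.length = s.length + u.length + t.length := by
      rw [← hst]; simp only [List.length_append]
    simp only [List.length_append] at h1
    have := hw.2
    omega

private lemma suffix_of_suffix_length_le' {α : Type*} {u v l : List α}
    (hu : u <:+ l) (hv : v <:+ l) (h : u.length ≤ v.length) : u <:+ v := by
  rw [← List.reverse_prefix] at hu hv ⊢
  exact List.prefix_of_prefix_length_le hu hv (by simpa)

private lemma infix_append_decomp {α : Type*} {f u v : List α} (h : f <:+: u ++ v) :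
    f <:+: u ∨ f <:+: v ∨
      ∃ a b, f = a ++ b ∧ a ≠ [] ∧ b ≠ [] ∧ a <:+ u ∧ b <+: v := by
  obtain ⟨s, t, hst⟩ := h
  have h1 : s ++ (f ++ t) = u ++ v := by rw [← hst]; simp [List.append_assoc]
  rcases List.append_eq_append_iff.mp h1 with ⟨a', ha1, ha2⟩ | ⟨c', hc1, hc2⟩
  · rcases List.append_eq_append_iff.mp ha2 with ⟨b', hb1, hb2⟩ | ⟨d', hd1, hd2⟩
    · left
      exact ⟨s, b', by rw [ha1, hb1]; exact List.append_assoc s f b'⟩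
    · by_cases ha' : a' = []
      · right; left
        refine ⟨[], t, ?_⟩
        subst ha'
        simp only [List.nil_append] at hd1 ⊢
        rw [← hd1] at hd2
        rw [hd2]
      · by_cases hd' : d' = []
        · left
          refine ⟨s, [], ?_⟩
          subst hd'
          simp only [List.append_nil] at hd1 ⊢
          rw [ha1, hd1]
        · right; right
          exact ⟨a', d', hd1, ha', hd', ⟨s, ha1.symm⟩, ⟨t, hd2.symm⟩⟩
  · right; left
    exact ⟨c', t, by rw [hc2]; exact List.append_assoc c' f t⟩

private lemma infix_concat' {α : Type*} {f w : List α} {x : α}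
    (h : f <:+: w ++ [x]) (hnw : ¬ f <:+: w) :
    ∃ b, b <:+ w ∧ f = b ++ [x] := by
  rcases infix_append_decomp h with h1 | h2 | ⟨a, b, hf, ha, hb, hau, hbv⟩
  · exact absurd h1 hnw
  · rcases List.sublist_singleton.mp h2.sublist with rfl | rfl
    · exact absurd (List.nil_infix) hnw
    · exact ⟨[], List.nil_suffix, by simp⟩
  · have hbx : b = [x] := by
      rcases List.sublist_singleton.mp hbv.sublist with h' | h'
      · exact absurd h' hb
      · exact h'
    exact ⟨a, hau, by rw [hf, hbx]⟩

end Aux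

/-- Lemma 2.1(iii): if the geodesics of `G` over `X` are `k`-locally excluding, `w` is
geodesic, `x ∈ X` and `v'` is the suffix of `w` of length `2k-2` (or all of `w`), then
`l_G(wx) - l(w) = l_G(v'x) - l(v')`. -/
theorem lG_append_sub_eq_suffix {G : Type*} [Group G] (X : Set G)
    (hfin : X.Finite) (hsym : ∀ x ∈ X, x⁻¹ ∈ X) (hgen : Subgroup.closure X = ⊤)
    (k : ℕ) (hk : 0 < k)
    (hle : LocallyExcluding X k {w : List G | Geodesic X w})
    (w : List G) (hw : Geodesic X w) (x : G) (hx : x ∈ X) :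
    (lG X ((w ++ [x]).prod) : ℤ) - w.length =
      (lG X ((w.drop (w.length - (2 * k - 2)) ++ [x]).prod) : ℤ) -
        (w.drop (w.length - (2 * k - 2))).length := by
  obtain ⟨F, hFfin, hFlen, hFchar⟩ := hle
  set n := w.length - (2 * k - 2) with hn
  set v' := w.drop n with hv'def
  set u := w.take n with hudef
  have huv : u ++ v' = w := List.take_append_drop n w
  have hwX : ∀ a ∈ w, a ∈ X := hw.1
  have hwlen : w.length = lG X w.prod := hw.2
  have hvsuf : v' <:+ w := by rw [hv'def]; exact List.drop_suffix n w
  have hvgeo : Geodesic X v' := geodesic_infix hw hvsuf.isInfix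
  have hvX : ∀ a ∈ v', a ∈ X := hvgeo.1
  have hM : v'.length = w.length - n := by rw [hv'def]; exact List.length_drop
  have huX : ∀ a ∈ u, a ∈ X := fun a ha => hwX a (by rw [← huv]; exact List.mem_append.mpr (Or.inl ha))
  have hulen : u.length + v'.length = w.length := by
    have := congrArg List.length huv; simpa using this
  rw [show (w ++ [x]).prod = w.prod * x from by simp,
      show (v' ++ [x]).prod = v'.prod * x from by simp]
  set d := lG X (w.prod * x) with hd
  set d' := lG X (v'.prod * x) with hd'
  -- easy subadditivity
  have easy : ∀ p s : List G, (∀ a ∈ p, a ∈ X) →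
      lG X (p.prod * s.prod * x) ≤ p.length + lG X (s.prod * x) := by
    intro p s hpX
    have e1 : lG X (p.prod * (s.prod * x)) ≤ lG X p.prod + lG X (s.prod * x) :=
      lG_mul_le hsym hgen _ _
    have e2 : lG X p.prod ≤ p.length := lG_le hpX rfl
    rw [← mul_assoc] at e1
    omega
  have h1 : d ≤ u.length + d' := by
    have e1 := easy u v' huX
    have e2 : u.prod * v'.prod * x = w.prod * x := by
      rw [← huv]; simp [List.prod_append]
    rw [e2] at e1
    omega
  have hxinv : lG X x⁻¹ ≤ 1 := by
    have := lG_le (w := [x⁻¹]) (by simpa using hsym x hx) (rfl)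
    simpa using this
  have hxle : lG X x ≤ 1 := by
    have := lG_le (w := [x]) (by simpa using hx) (rfl)
    simpa using this
  have h2 : w.length ≤ d + 1 := by
    have e1 : lG X (w.prod * x * x⁻¹) ≤ lG X (w.prod * x) + lG X x⁻¹ :=
      lG_mul_le hsym hgen _ _
    rw [mul_inv_cancel_right] at e1
    rw [← hwlen] at e1
    omega
  have h3 : d' ≤ v'.length + 1 := by
    have e1 : lG X (v'.prod * x) ≤ lG X v'.prod + lG X x := lG_mul_le hsym hgen _ _
    have e2 : lG X v'.prod ≤ v'.length := lG_le hvX rfl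
    omega
  -- characterization helpers
  have noforb_w : ∀ f ∈ F, ¬ f <:+: w := (hFchar w hwX).mp hw
  have getForb : ∀ z : List G, (∀ a ∈ z, a ∈ X) → lG X z.prod ≠ z.length →
      ∃ f ∈ F, f <:+: z := by
    intro z hz hne
    by_contra hc
    push_neg at hc
    have hg : Geodesic X z := (hFchar z hz).mpr (fun f hf => hc f hf)
    exact hne hg.2.symm
  have forbShort : ∀ z : List G, (∀ a ∈ z, a ∈ X) → (∃ f ∈ F, f <:+: z) →
      lG X z.prod + 1 ≤ z.length := by
    rintro z hz ⟨f, hf, hfz⟩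
    have ha : lG X z.prod ≤ z.length := lG_le hz rfl
    have hb : z.length ≠ lG X z.prod := by
      intro heq
      have hg : Geodesic X z := ⟨hz, heq⟩
      exact ((hFchar z hz).mp hg) f hf hfz
    omega
  have hwxX : ∀ a ∈ w ++ [x], a ∈ X := by
    intro a ha
    rcases List.mem_append.mp ha with h | h
    · exact hwX a h
    · rw [List.mem_singleton] at h; subst h; exact hx
  have hvxX : ∀ a ∈ v' ++ [x], a ∈ X := by
    intro a ha
    rcases List.mem_append.mp ha with h | h
    · exact hvX a h
    · rw [List.mem_singleton] at h; subst h; exact hx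
  -- Case A : d ≤ |w|  →  d' ≤ |v'|
  have hcaseA : d ≤ w.length → d' ≤ v'.length := by
    intro hdl
    obtain ⟨f, hfF, hfinf⟩ := getForb (w ++ [x]) hwxX (by
      rw [show (w ++ [x]).prod = w.prod * x from by simp, ← hd]
      simp only [List.length_append, List.length_singleton]
      omega)
    obtain ⟨b, hbw, hfb⟩ := infix_concat' hfinf (noforb_w f hfF)
    have hblen : b.length + 1 ≤ k := by
      have := hFlen f hfF; rw [hfb] at this; simpa using this
    have hbw_len : b.length ≤ w.length := hbw.length_le
    have hbM : b.length ≤ v'.length := by omega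
    have hfsuf : f <:+ w ++ [x] := by
      obtain ⟨p, hp⟩ := hbw
      exact ⟨p, by rw [hfb, ← List.append_assoc, hp]⟩
    have hvsuf' : v' ++ [x] <:+ w ++ [x] := by
      obtain ⟨p, hp⟩ := hvsuf
      exact ⟨p, by rw [← List.append_assoc, hp]⟩
    have hfv : f <:+ v' ++ [x] := by
      refine suffix_of_suffix_length_le' hfsuf hvsuf' ?_
      rw [hfb]
      simp only [List.length_append, List.length_singleton]
      omega
    have hres := forbShort (v' ++ [x]) hvxX ⟨f, hfF, hfv.isInfix⟩
    rw [show (v' ++ [x]).prod = v'.prod * x from by simp, ← hd'] at hres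
    simp only [List.length_append, List.length_singleton] at hres
    omega
  -- Case B : d + 1 ≤ |w|  →  d' + 1 ≤ |v'|
  have hcaseB : d + 1 ≤ w.length → d' + 1 ≤ v'.length := by
    intro hdl
    have hd_eq : d + 1 = w.length := le_antisymm hdl h2
    obtain ⟨f, hfF, hfinf⟩ := getForb (w ++ [x]) hwxX (by
      rw [show (w ++ [x]).prod = w.prod * x from by simp, ← hd]
      simp only [List.length_append, List.length_singleton]
      omega)
    obtain ⟨b, hbw, hfb⟩ := infix_concat' hfinf (noforb_w f hfF)
    have hblen : b.length + 1 ≤ k := by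
      have := hFlen f hfF; rw [hfb] at this; simpa using this
    have hbw_len : b.length ≤ w.length := hbw.length_le
    have hbM : b.length ≤ v'.length := by omega
    have hbX : ∀ a ∈ b, a ∈ X := fun a ha => hwX a (hbw.sublist.subset ha)
    have hfX : ∀ a ∈ f, a ∈ X := by
      intro a ha
      rw [hfb] at ha
      rcases List.mem_append.mp ha with h | h
      · exact hbX a h
      · rw [List.mem_singleton] at h; subst h; exact hx
    have hfshort : lG X (b.prod * x) + 1 ≤ b.length + 1 := by
      have := forbShort f hfX ⟨f, hfF, List.infix_refl f⟩
      rw [hfb] at this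
      simp only [List.prod_append, List.prod_singleton, List.length_append,
        List.length_singleton] at this
      omega
    rcases Nat.lt_or_ge (lG X (b.prod * x)) b.length with hlt | hge
    · -- b itself already shortens: d' ≤ |v'| - 1 directly
      obtain ⟨p, hp⟩ := suffix_of_suffix_length_le' hbw hvsuf hbM
      have hpX : ∀ a ∈ p, a ∈ X := fun a ha => hvX a (by rw [← hp]; exact List.mem_append.mpr (Or.inl ha))
      have heasy := easy p b hpX
      have hpe : p.prod * b.prod * x = v'.prod * x := by
        rw [← hp]; simp [List.prod_append]
      rw [hpe, ← hd'] at heasy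
      have hplen : p.length + b.length = v'.length := by
        have := congrArg List.length hp; simpa using this
      omega
    · have hbe : lG X (b.prod * x) = b.length := le_antisymm (by omega) hge
      obtain ⟨c, hcX, hcp, hclen⟩ := lG_spec (exists_rep hsym hgen (b.prod * x))
      have hclen' : c.length = b.length := by rw [hclen, hbe]
      obtain ⟨w0, hw0⟩ := hbw
      have hw0X : ∀ a ∈ w0, a ∈ X := fun a ha => hwX a (by rw [← hw0]; exact List.mem_append.mpr (Or.inl ha))
      have hw0len : w0.length + b.length = w.length := by
        have := congrArg List.length hw0; simpa using this
      have hAX : ∀ a ∈ w0 ++ c, a ∈ X := by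
        intro a ha
        rcases List.mem_append.mp ha with h | h
        exacts [hw0X a h, hcX a h]
      have hAprod : (w0 ++ c).prod = w.prod * x := by
        rw [List.prod_append, hcp, ← hw0]
        simp [List.prod_append, mul_assoc]
      obtain ⟨f2, hf2F, hf2inf⟩ := getForb (w0 ++ c) hAX (by
        rw [hAprod, ← hd]
        simp only [List.length_append]
        omega)
      have hw0inf : w0 <:+: w := ⟨[], b, by simp [hw0]⟩
      have hcgeod : Geodesic X c := ⟨hcX, by rw [hcp]; exact hclen⟩
      rcases infix_append_decomp hf2inf with hcase | hcase | ⟨a2, b2, hf2, ha2ne, hb2ne, ha2w0, hb2c⟩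
      · exact absurd (hcase.trans hw0inf) (noforb_w f2 hf2F)
      · exact absurd hcase (((hFchar c hcX).mp hcgeod) f2 hf2F)
      · have hb2pos : 1 ≤ b2.length := List.length_pos_iff.mpr hb2ne
        have ha2len : a2.length + 1 ≤ k := by
          have := hFlen f2 hf2F
          rw [hf2] at this
          simp only [List.length_append] at this
          omega
        have ha2X : ∀ a ∈ a2, a ∈ X := fun a ha => hw0X a (ha2w0.sublist.subset ha)
        have hTX : ∀ a ∈ a2 ++ c, a ∈ X := by
          intro a ha
          rcases List.mem_append.mp ha with h | h
          exacts [ha2X a h, hcX a h]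
        have hf2T : f2 <:+: a2 ++ c := by
          obtain ⟨r, hr⟩ := hb2c
          refine ⟨[], r, ?_⟩
          rw [hf2]
          simp only [List.nil_append]
          rw [List.append_assoc, hr]
        have hTshort := forbShort (a2 ++ c) hTX ⟨f2, hf2F, hf2T⟩
        simp only [List.length_append] at hTshort
        obtain ⟨q, hq⟩ := ha2w0
        have hVsuf : (a2 ++ b) <:+ w := ⟨q, by rw [← List.append_assoc, hq, hw0]⟩
        have hVw : (a2 ++ b).length ≤ w.length := hVsuf.length_le
        have hVlen : (a2 ++ b).length ≤ v'.length := by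
          simp only [List.length_append] at hVw ⊢
          omega
        obtain ⟨p, hp⟩ := suffix_of_suffix_length_le' hVsuf hvsuf hVlen
        have hpX : ∀ a ∈ p, a ∈ X := fun a ha => hvX a (by rw [← hp]; exact List.mem_append.mpr (Or.inl ha))
        have heasy := easy p (a2 ++ b) hpX
        have hid : p.prod * (a2 ++ b).prod * x = v'.prod * x := by
          rw [← hp]; simp [List.prod_append]
        have hid2 : (a2 ++ b).prod * x = (a2 ++ c).prod := by
          simp [List.prod_append, hcp, mul_assoc]
        rw [hid, hid2, ← hd'] at heasy
        have hplen : p.length + (a2.length + b.length) = v'.length := by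
          have := congrArg List.length hp; simpa using this
        omega
  -- conclude by case analysis + arithmetic
  by_cases hA : d + 1 ≤ w.length
  · have := hcaseB hA
    omega
  · by_cases hB : d ≤ w.length
    · have := hcaseA hB
      omega
    · omega
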